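/- Let H be a Hopf algebra, J ∈ H ⊗ H a twisting element, and A a left H-module algebra. Then the map (μ_A)_J(f ⊗ g) = μ_A(J · (f ⊗ g)) defines an associative product on A with the same unit 1_A, and A with this new product is a left module algebra over the twisted Hopf algebra (H)_J. -/

import Mathlib

/- STATEMENT 12: If H is a Hopf algebra, J ∈ H ⊗ H a twisting element, and A a left
H-module algebra, then (μ_A)_J(f ⊗ g) = μ_A(J · (f ⊗ g)) is an associative product on A
with the same unit, and (A, (μ_A)_J) is a left module algebra over the twist (H)_J. -/

open TensorProduct

universe u

section defs

variable (K : Type u) [Field K] {H A : Type u} [Ring H] [HopfAlgebra K H]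
  [Ring A] [Algebra K A]

/-- the action of `H ⊗ H` on `A ⊗ A` induced by an action `act : H →ₗ End A`. -/
noncomputable def act2 (act : H →ₗ[K] Module.End K A) :
    H ⊗[K] H →ₗ[K] A ⊗[K] A →ₗ[K] A ⊗[K] A :=
  TensorProduct.homTensorHomMap (RingHom.id K) A A A A ∘ₗ TensorProduct.map act act

/-- the twisted product `(μ_A)_J(f ⊗ g) = μ_A(J · (f ⊗ g))`. -/
noncomputable def twMul (act : H →ₗ[K] Module.End K A) (J : H ⊗[K] H) (f g : A) : A :=
  LinearMap.mul' K A (act2 K act J (f ⊗ₜ[K] g))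

end defs

section aux
variable {K : Type u} [Field K] {B C M N : Type u}
  [Ring B] [Algebra K B] [Ring C] [Algebra K C]
  [AddCommGroup M] [Module K M] [AddCommGroup N] [Module K N]

/-- generic combined action of `B ⊗ C` on `M ⊗ N`. -/
noncomputable def tact (a1 : B →ₗ[K] Module.End K M) (a2 : C →ₗ[K] Module.End K N) :
    B ⊗[K] C →ₗ[K] M ⊗[K] N →ₗ[K] M ⊗[K] N :=
  TensorProduct.homTensorHomMap (RingHom.id K) M N M N ∘ₗ TensorProduct.map a1 a2

lemma tact_tmul (a1 : B →ₗ[K] Module.End K M) (a2 : C →ₗ[K] Module.End K N) (x : B) (y : C) :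
    tact a1 a2 (x ⊗ₜ[K] y) = TensorProduct.map (a1 x) (a2 y) := by
  simp [tact]

lemma tact_mul (a1 : B →ₗ[K] Module.End K M) (a2 : C →ₗ[K] Module.End K N)
    (h1 : ∀ x y, a1 (x * y) = a1 x * a1 y) (h2 : ∀ x y, a2 (x * y) = a2 x * a2 y)
    (X Y : B ⊗[K] C) :
    tact a1 a2 (X * Y) = tact a1 a2 X ∘ₗ tact a1 a2 Y := by
  induction X using TensorProduct.induction_on with
  | zero => simp
  | add X₁ X₂ ih₁ ih₂ => simp [add_mul, ih₁, ih₂, LinearMap.add_comp]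
  | tmul x y =>
    induction Y using TensorProduct.induction_on with
    | zero => simp
    | add Y₁ Y₂ ih₁ ih₂ => simp [mul_add, ih₁, ih₂, LinearMap.comp_add]
    | tmul x' y' =>
      simp only [Algebra.TensorProduct.tmul_mul_tmul, tact_tmul, h1, h2]
      rw [Module.End.mul_eq_comp, Module.End.mul_eq_comp, TensorProduct.map_comp]

end aux

set_option maxHeartbeats 1000000 in
theorem stmt12 {K H A : Type u} [Field K] [Ring H] [HopfAlgebra K H]
    [Ring A] [Algebra K A]
    -- A is a left H-module algebra via act
    (act : H →ₗ[K] Module.End K A)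
    (hact_mul : ∀ h h' : H, act (h * h') = act h * act h')
    (hact_one : act 1 = 1)
    (hmodalg : ∀ (h : H) (f g : A),
      act h (f * g) = LinearMap.mul' K A (act2 K act (Coalgebra.comul (R := K) h) (f ⊗ₜ[K] g)))
    (hmodone : ∀ h : H, act h (1 : A) = Coalgebra.counit (R := K) h • (1 : A))
    -- J is a twisting element of H
    (J Ji : H ⊗[K] H)
    (hJJi : J * Ji = 1) (hJiJ : Ji * J = 1)
    (hcocycle : Algebra.TensorProduct.assoc K K K H H H
          (LinearMap.rTensor H (Coalgebra.comul (R := K)) J)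
        * Algebra.TensorProduct.map (AlgHom.id K H) Algebra.TensorProduct.includeLeft J
      = LinearMap.lTensor H (Coalgebra.comul (R := K)) J
        * (Algebra.TensorProduct.includeRight : (H ⊗[K] H) →ₐ[K] H ⊗[K] (H ⊗[K] H)) J)
    (hcounit₁ : (TensorProduct.lid K H) (LinearMap.rTensor H (Coalgebra.counit (R := K)) J) = 1)
    (hcounit₂ : (TensorProduct.rid K H) (LinearMap.lTensor H (Coalgebra.counit (R := K)) J) = 1) :
    -- the twisted product is associative with unit 1_A,
    (∀ f g h : A, twMul K act J (twMul K act J f g) h = twMul K act J f (twMul K act J g h))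
    ∧ (∀ f : A, twMul K act J 1 f = f)
    ∧ (∀ f : A, twMul K act J f 1 = f)
    -- and A with the twisted product is a module algebra over (H)_J, whose
    -- comultiplication is Δ_J = J⁻¹ Δ J : equivalently J · Δ_J(h) = Δ(h) · J acts as
    ∧ (∀ (h : H) (f g : A),
        act h (twMul K act J f g)
          = LinearMap.mul' K A (act2 K act (Coalgebra.comul (R := K) h * J) (f ⊗ₜ[K] g))) := by
  classical
  set μ : A ⊗[K] A →ₗ[K] A := LinearMap.mul' K A with hμ
  set Φ : H ⊗[K] H →ₗ[K] Module.End K (A ⊗[K] A) := tact act act with hΦdef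
  have hΦ : act2 K act = Φ := rfl
  have Φ_tmul : ∀ x y : H, Φ (x ⊗ₜ[K] y) = TensorProduct.map (act x) (act y) :=
    tact_tmul act act
  -- module-algebra identity as linear maps
  have modalg' : ∀ c : H, (act c) ∘ₗ μ = μ ∘ₗ Φ (Coalgebra.comul (R := K) c) := by
    intro c
    apply TensorProduct.ext'
    intro f g
    simpa [hΦ, hμ] using hmodalg c f g
  have Phi_mul : ∀ X Y : H ⊗[K] H, Φ (X * Y) = Φ X ∘ₗ Φ Y :=
    tact_mul act act hact_mul hact_mul
  -- the triple actions
  set ΨL : (H ⊗[K] H) ⊗[K] H →ₗ[K] Module.End K ((A ⊗[K] A) ⊗[K] A) := tact Φ act with hΨL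
  set ΨR : H ⊗[K] (H ⊗[K] H) →ₗ[K] Module.End K (A ⊗[K] (A ⊗[K] A)) := tact act Φ with hΨR
  have ΨL_tmul : ∀ (x : H ⊗[K] H) (y : H),
      ΨL (x ⊗ₜ[K] y) = TensorProduct.map (Φ x) (act y) := tact_tmul Φ act
  have ΨR_tmul : ∀ (x : H) (y : H ⊗[K] H),
      ΨR (x ⊗ₜ[K] y) = TensorProduct.map (act x) (Φ y) := tact_tmul act Φ
  have ΨL_mul : ∀ X Y, ΨL (X * Y) = ΨL X ∘ₗ ΨL Y :=
    tact_mul Φ act Phi_mul hact_mul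
  have ΨR_mul : ∀ X Y, ΨR (X * Y) = ΨR X ∘ₗ ΨR Y :=
    tact_mul act Φ hact_mul Phi_mul
  set P : (A ⊗[K] A) ⊗[K] A →ₗ[K] A ⊗[K] A := LinearMap.rTensor A μ with hP
  set Q : A ⊗[K] (A ⊗[K] A) →ₗ[K] A ⊗[K] A := LinearMap.lTensor A μ with hQ
  have commL : ∀ x : H ⊗[K] H,
      Φ x ∘ₗ P = P ∘ₗ ΨL (LinearMap.rTensor H (Coalgebra.comul (R := K)) x) := by
    intro x
    induction x using TensorProduct.induction_on with
    | zero => simp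
    | add x₁ x₂ ih₁ ih₂ => simp [ih₁, ih₂, LinearMap.add_comp, LinearMap.comp_add]
    | tmul c d =>
      apply TensorProduct.ext'
      intro u a
      have hc := LinearMap.congr_fun (modalg' c) u
      simp only [LinearMap.coe_comp, Function.comp_apply] at hc
      simp only [LinearMap.coe_comp, Function.comp_apply, hP, LinearMap.rTensor_tmul,
        Φ_tmul, ΨL_tmul, TensorProduct.map_tmul, hc]
  have commR : ∀ x : H ⊗[K] H,
      Φ x ∘ₗ Q = Q ∘ₗ ΨR (LinearMap.lTensor H (Coalgebra.comul (R := K)) x) := by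
    intro x
    induction x using TensorProduct.induction_on with
    | zero => simp
    | add x₁ x₂ ih₁ ih₂ => simp [ih₁, ih₂, LinearMap.add_comp, LinearMap.comp_add]
    | tmul c d =>
      apply TensorProduct.ext'
      intro a u
      have hd := LinearMap.congr_fun (modalg' d) u
      simp only [LinearMap.coe_comp, Function.comp_apply] at hd
      simp only [LinearMap.coe_comp, Function.comp_apply, hQ, LinearMap.lTensor_tmul,
        Φ_tmul, ΨR_tmul, TensorProduct.map_tmul, hd]
  -- cross compatibility with the associator
  have cross : ∀ (f g h : A) (X : (H ⊗[K] H) ⊗[K] H),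
      μ (P (ΨL X ((f ⊗ₜ[K] g) ⊗ₜ[K] h)))
        = μ (Q (ΨR (Algebra.TensorProduct.assoc K K K H H H X) (f ⊗ₜ[K] (g ⊗ₜ[K] h)))) := by
    intro f g h X
    induction X using TensorProduct.induction_on with
    | zero => simp
    | add X₁ X₂ ih₁ ih₂ => simp [ih₁, ih₂]
    | tmul x c =>
      induction x using TensorProduct.induction_on with
      | zero => simp
      | add x₁ x₂ ih₁ ih₂ =>
        rw [TensorProduct.add_tmul]
        simp only [map_add, LinearMap.add_apply, ih₁, ih₂]
      | tmul a b =>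
        simp only [Algebra.TensorProduct.assoc_tmul, ΨL_tmul, ΨR_tmul, Φ_tmul,
          TensorProduct.map_tmul, hP, hQ, LinearMap.rTensor_tmul, LinearMap.lTensor_tmul,
          hμ, LinearMap.mul'_apply, mul_assoc]
  -- the associator carries one side of the cocycle to the other
  have hinc : ∀ z : H ⊗[K] H, (Algebra.TensorProduct.assoc K K K H H H) (z ⊗ₜ[K] (1 : H))
      = Algebra.TensorProduct.map (AlgHom.id K H)
          (Algebra.TensorProduct.includeLeft : H →ₐ[K] H ⊗[K] H) z := by
    intro z
    induction z using TensorProduct.induction_on with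
    | zero => simp
    | add x y ihx ihy =>
      rw [TensorProduct.add_tmul, map_add, ihx, ihy, map_add]
    | tmul a b => simp
  have hXL : (Algebra.TensorProduct.assoc K K K H H H)
        (LinearMap.rTensor H (Coalgebra.comul (R := K)) J * (J ⊗ₜ[K] (1 : H)))
      = LinearMap.lTensor H (Coalgebra.comul (R := K)) J * ((1 : H) ⊗ₜ[K] J) := by
    rw [map_mul, hinc J, hcocycle, Algebra.TensorProduct.includeRight_apply]
  refine ⟨?_, ?_, ?_, ?_⟩
  · -- associativity
    intro f g h
    have e1 : twMul K act J (twMul K act J f g) h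
        = μ (Φ J (P (ΨL (J ⊗ₜ[K] (1 : H)) ((f ⊗ₜ[K] g) ⊗ₜ[K] h)))) := by
      rw [ΨL_tmul, hact_one]
      simp only [TensorProduct.map_tmul, Module.End.one_apply, hP, LinearMap.rTensor_tmul]
      rfl
    have e2 : twMul K act J f (twMul K act J g h)
        = μ (Φ J (Q (ΨR ((1 : H) ⊗ₜ[K] J) (f ⊗ₜ[K] (g ⊗ₜ[K] h))))) := by
      rw [ΨR_tmul, hact_one]
      simp only [TensorProduct.map_tmul, Module.End.one_apply, hQ, LinearMap.lTensor_tmul]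
      rfl
    rw [e1, e2]
    have c1 := LinearMap.congr_fun (commL J) (ΨL (J ⊗ₜ[K] (1 : H)) ((f ⊗ₜ[K] g) ⊗ₜ[K] h))
    have c2 := LinearMap.congr_fun (commR J) (ΨR ((1 : H) ⊗ₜ[K] J) (f ⊗ₜ[K] (g ⊗ₜ[K] h)))
    simp only [LinearMap.coe_comp, Function.comp_apply] at c1 c2
    rw [c1, c2]
    have l1 : ΨL (LinearMap.rTensor H (Coalgebra.comul (R := K)) J)
          (ΨL (J ⊗ₜ[K] (1 : H)) ((f ⊗ₜ[K] g) ⊗ₜ[K] h))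
        = ΨL (LinearMap.rTensor H (Coalgebra.comul (R := K)) J * (J ⊗ₜ[K] (1 : H)))
            ((f ⊗ₜ[K] g) ⊗ₜ[K] h) := by rw [ΨL_mul]; rfl
    have l2 : ΨR (LinearMap.lTensor H (Coalgebra.comul (R := K)) J)
          (ΨR ((1 : H) ⊗ₜ[K] J) (f ⊗ₜ[K] (g ⊗ₜ[K] h)))
        = ΨR (LinearMap.lTensor H (Coalgebra.comul (R := K)) J * ((1 : H) ⊗ₜ[K] J))
            (f ⊗ₜ[K] (g ⊗ₜ[K] h)) := by rw [ΨR_mul]; rfl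
    rw [l1, l2, ← hXL]
    exact cross f g h _
  · -- left unit
    intro f
    have key : (μ ∘ₗ Φ.flip ((1 : A) ⊗ₜ[K] f))
        = (act.flip f) ∘ₗ (TensorProduct.lid K H).toLinearMap
            ∘ₗ LinearMap.rTensor H (Coalgebra.counit (R := K)) := by
      apply TensorProduct.ext'
      intro c d
      simp only [LinearMap.coe_comp, Function.comp_apply, LinearMap.flip_apply, Φ_tmul,
        TensorProduct.map_tmul, hmodone, hμ, LinearMap.rTensor_tmul, LinearEquiv.coe_coe,
        TensorProduct.lid_tmul, map_smul, TensorProduct.smul_tmul', LinearMap.mul'_apply,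
        LinearMap.smul_apply, smul_mul_assoc, one_mul]
    have hk := LinearMap.congr_fun key J
    simp only [LinearMap.coe_comp, Function.comp_apply, LinearMap.flip_apply,
      LinearEquiv.coe_coe] at hk
    rw [hcounit₁, hact_one] at hk
    simpa [twMul, hΦ, hμ] using hk
  · -- right unit
    intro f
    have key : (μ ∘ₗ Φ.flip (f ⊗ₜ[K] (1 : A)))
        = (act.flip f) ∘ₗ (TensorProduct.rid K H).toLinearMap
            ∘ₗ LinearMap.lTensor H (Coalgebra.counit (R := K)) := by
      apply TensorProduct.ext'
      intro c d
      simp only [LinearMap.coe_comp, Function.comp_apply, LinearMap.flip_apply, Φ_tmul,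
        TensorProduct.map_tmul, hmodone, hμ, LinearMap.lTensor_tmul, LinearEquiv.coe_coe,
        TensorProduct.rid_tmul, map_smul, TensorProduct.tmul_smul, LinearMap.mul'_apply,
        LinearMap.smul_apply, mul_smul_comm, mul_one]
    have hk := LinearMap.congr_fun key J
    simp only [LinearMap.coe_comp, Function.comp_apply, LinearMap.flip_apply,
      LinearEquiv.coe_coe] at hk
    rw [hcounit₂, hact_one] at hk
    simpa [twMul, hΦ, hμ] using hk
  · -- module algebra over the twist
    intro h f g
    have hx := LinearMap.congr_fun (modalg' h) (Φ J (f ⊗ₜ[K] g))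
    simp only [LinearMap.coe_comp, Function.comp_apply] at hx
    show act h (μ (Φ J (f ⊗ₜ[K] g))) = μ (Φ (Coalgebra.comul (R := K) h * J) (f ⊗ₜ[K] g))
    rw [Phi_mul]
    exact hx
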